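/- Let E be an elliptic curve over ℚ given by y² = x³ + Ax + B with A, B ∈ ℤ. Then E has a rational point of order 3 if and only if there exist a, b ∈ ℤ such that A = 6ab + 27a⁴ and B = b² − 27a⁶. -/

import Mathlib

open WeierstrassCurve.Affine

/-- Rational root trick: a rational root of a monic integer quartic is an integer. -/
private lemma rat_int_of_quartic (q : ℚ) (c₀ c₁ c₂ c₃ : ℤ)
    (h : q ^ 4 = c₃ * q ^ 3 + c₂ * q ^ 2 + c₁ * q + c₀) : ∃ n : ℤ, q = (n : ℚ) := by
  have hd0 : ((q.den : ℤ) : ℚ) ≠ 0 := by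
    exact_mod_cast (Nat.cast_ne_zero (R := ℚ)).mpr q.den_nz
  have hq : (q.num : ℚ) = q * (q.den : ℚ) := (Rat.mul_den_eq_num q).symm
  have key : (q.num : ℚ) ^ 4 =
      c₃ * q.num ^ 3 * q.den + c₂ * q.num ^ 2 * q.den ^ 2 + c₁ * q.num * q.den ^ 3
        + c₀ * q.den ^ 4 := by
    rw [hq]
    linear_combination ((q.den : ℚ)) ^ 4 * h
  have keyZ : q.num ^ 4 = (q.den : ℤ) *
      (c₃ * q.num ^ 3 + c₂ * q.num ^ 2 * q.den + c₁ * q.num * q.den ^ 2 + c₀ * q.den ^ 3) := by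
    have : ((q.num ^ 4 : ℤ) : ℚ) = (((q.den : ℤ) *
        (c₃ * q.num ^ 3 + c₂ * q.num ^ 2 * q.den + c₁ * q.num * q.den ^ 2 + c₀ * q.den ^ 3) : ℤ) : ℚ) := by
      push_cast
      linear_combination key
    exact_mod_cast this
  have hdvd : (q.den : ℤ) ∣ q.num ^ 4 := ⟨_, keyZ⟩
  have hdvd' : q.den ∣ q.num.natAbs ^ 4 := by
    have := Int.natAbs_dvd_natAbs.mpr hdvd
    simpa [Int.natAbs_pow] using this
  have hden1 : q.den = 1 := (q.reduced.symm.pow_right 4).eq_one_of_dvd hdvd'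
  refine ⟨q.num, ?_⟩
  rw [← Rat.num_div_den q, hden1]
  simp

private lemma some_eq_some {F : Type*} [Field F] {W : WeierstrassCurve.Affine F}
    {x₁ y₁ x₂ y₂ : F} (h₁ : W.Nonsingular x₁ y₁) (h₂ : W.Nonsingular x₂ y₂)
    (hx : x₁ = x₂) (hy : y₁ = y₂) : Point.some _ _ h₁ = Point.some _ _ h₂ := by
  subst hx; subst hy; rfl

theorem rational_three_torsion_iff
    (A B : ℤ) (hΔ : 4 * A ^ 3 + 27 * B ^ 2 ≠ 0) :
    let W : WeierstrassCurve ℚ := ⟨0, 0, 0, (A : ℚ), (B : ℚ)⟩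
    (∃ P : W.toAffine.Point, addOrderOf P = 3) ↔
      ∃ a b : ℤ, A = 6 * a * b + 27 * a ^ 4 ∧ B = b ^ 2 - 27 * a ^ 6 := by
  intro W
  have ha₁ : W.toAffine.a₁ = 0 := rfl
  have ha₂ : W.toAffine.a₂ = 0 := rfl
  have ha₃ : W.toAffine.a₃ = 0 := rfl
  have ha₄ : W.toAffine.a₄ = (A : ℚ) := rfl
  have ha₆ : W.toAffine.a₆ = (B : ℚ) := rfl
  have hΔ' : W.toAffine.Δ ≠ 0 := by
    have hval : W.toAffine.Δ = -16 * ((4 * A ^ 3 + 27 * B ^ 2 : ℤ) : ℚ) := by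
      simp only [WeierstrassCurve.Δ, WeierstrassCurve.b₂, WeierstrassCurve.b₄,
        WeierstrassCurve.b₆, WeierstrassCurve.b₈, ha₁, ha₂, ha₃, ha₄, ha₆]
      push_cast
      ring
    rw [hval]
    exact mul_ne_zero (by norm_num) (Int.cast_ne_zero.mpr hΔ)
  have hnegY : ∀ x y : ℚ, W.toAffine.negY x y = -y := by
    intro x y
    simp only [WeierstrassCurve.Affine.negY, ha₁, ha₃]
    ring
  constructor
  · rintro ⟨P, hP⟩
    have h3 : (3 : ℕ) • P = 0 := by rw [← hP]; exact addOrderOf_nsmul_eq_zero P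
    rcases P with _ | @⟨x, y, hns⟩
    · rw [show (WeierstrassCurve.Affine.Point.zero : W.toAffine.Point) = 0 from rfl,
        addOrderOf_zero] at hP
      norm_num at hP
    have hPP : Point.some _ _ hns + Point.some _ _ hns = -Point.some _ _ hns := by
      have h3' : Point.some _ _ hns + Point.some _ _ hns + Point.some _ _ hns = 0 := by
        have := h3
        rw [show (3 : ℕ) = 2 + 1 from rfl, add_nsmul, two_nsmul, one_nsmul] at this
        exact this
      exact eq_neg_of_add_eq_zero_left h3'
    by_cases hy : y = W.toAffine.negY x y
    · exfalso
      rw [Point.add_self_of_Y_eq hy] at hPP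
      exact Point.some_ne_zero hns (neg_eq_zero.mp hPP.symm)
    rw [Point.add_self_of_Y_ne hy, Point.neg_some] at hPP
    rw [Point.some.injEq] at hPP
    have hx1 := hPP.1
    -- basic coordinate facts
    have hy0 : y ≠ 0 := by
      intro hc
      exact hy (by rw [hnegY, hc, neg_zero])
    have heqn : y ^ 2 = x ^ 3 + A * x + B := by
      have := (W.toAffine.equation_iff x y).mp hns.left
      rw [ha₁, ha₂, ha₃, ha₄, ha₆] at this
      linear_combination this
    set ℓ := W.toAffine.slope x x y y with hℓdef
    have h2y : (2 : ℚ) * y ≠ 0 := mul_ne_zero two_ne_zero hy0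
    have hsl : ℓ * (2 * y) = 3 * x ^ 2 + A := by
      rw [hℓdef, slope_of_Y_ne rfl hy, hnegY, ha₁, ha₂, ha₄,
        show y - -y = 2 * y by ring, div_mul_cancel₀ _ h2y]
      ring
    have hx3 : ℓ ^ 2 = 3 * x := by
      have := hx1
      rw [WeierstrassCurve.Affine.addX, ha₁, ha₂] at this
      linear_combination this
    -- ℓ² satisfies a monic integer quartic
    have e5 : 3 * x * (4 * (x ^ 3 + A * x + B)) = (3 * x ^ 2 + A) ^ 2 := by
      rw [← heqn, ← hx3]
      linear_combination (ℓ * (2 * y) + 3 * x ^ 2 + A) * hsl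
    have hs : (ℓ ^ 2) ^ 4 = (0 : ℤ) * (ℓ ^ 2) ^ 3 + ((-18 * A : ℤ) : ℚ) * (ℓ ^ 2) ^ 2
        + ((-108 * B : ℤ) : ℚ) * (ℓ ^ 2) + ((27 * A ^ 2 : ℤ) : ℚ) := by
      push_cast
      rw [hx3]
      linear_combination 27 * e5
    obtain ⟨m, hm⟩ := rat_int_of_quartic (ℓ ^ 2) _ _ _ _ hs
    obtain ⟨L, hL⟩ := rat_int_of_quartic ℓ 0 0 m 0 (by
      push_cast
      linear_combination ℓ ^ 2 * hm)
    have hZ : L ^ 8 + 18 * A * L ^ 4 + 108 * B * L ^ 2 = 27 * A ^ 2 := by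
      have hq : ((L ^ 8 + 18 * A * L ^ 4 + 108 * B * L ^ 2 : ℤ) : ℚ) = ((27 * A ^ 2 : ℤ) : ℚ) := by
        push_cast
        rw [← hL]
        push_cast at hs
        linear_combination hs
      exact_mod_cast hq
    have h3L : (3 : ℤ) ∣ L := by
      refine Int.prime_three.dvd_of_dvd_pow (n := 8) ?_
      exact ⟨9 * A ^ 2 - 6 * A * L ^ 4 - 36 * B * L ^ 2, by linear_combination hZ⟩
    obtain ⟨a, ha⟩ := h3L
    have hxa : x = 3 * (a : ℚ) ^ 2 := by
      have h := hx3
      rw [hL, ha] at h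
      push_cast at h
      linear_combination -1 / 3 * h
    have hyk : y ^ 2 = ((27 * a ^ 6 + 3 * A * a ^ 2 + B : ℤ) : ℚ) := by
      push_cast
      linear_combination heqn + (x ^ 2 + 3 * (a : ℚ) ^ 2 * x + 9 * (a : ℚ) ^ 4 + A) * hxa
    obtain ⟨Y, hY⟩ := rat_int_of_quartic y 0 0 (27 * a ^ 6 + 3 * A * a ^ 2 + B) 0 (by
      push_cast
      push_cast at hyk
      linear_combination y ^ 2 * hyk)
    have hYZ : Y ^ 2 = 27 * a ^ 6 + 3 * A * a ^ 2 + B := by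
      have : ((Y ^ 2 : ℤ) : ℚ) = ((27 * a ^ 6 + 3 * A * a ^ 2 + B : ℤ) : ℚ) := by
        push_cast
        rw [← hY]
        push_cast at hyk
        linear_combination hyk
      exact_mod_cast this
    have hslZ : 6 * a * Y = 27 * a ^ 4 + A := by
      have h := hsl
      rw [hL, ha, hY, hxa] at h
      have : ((6 * a * Y : ℤ) : ℚ) = ((27 * a ^ 4 + A : ℤ) : ℚ) := by
        push_cast
        push_cast at h
        linear_combination h
      exact_mod_cast this
    refine ⟨a, Y - 9 * a ^ 3, ?_, ?_⟩
    · linear_combination -hslZ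
    · linear_combination -hYZ + 3 * a ^ 2 * hslZ
  · rintro ⟨a, b, hA, hB⟩
    have hA' : (A : ℚ) = 6 * a * b + 27 * (a : ℚ) ^ 4 := by exact_mod_cast congrArg (Int.cast : ℤ → ℚ) hA
    have hB' : (B : ℚ) = (b : ℚ) ^ 2 - 27 * (a : ℚ) ^ 6 := by exact_mod_cast congrArg (Int.cast : ℤ → ℚ) hB
    set x : ℚ := 3 * (a : ℚ) ^ 2 with hxdef
    set y : ℚ := (b : ℚ) + 9 * (a : ℚ) ^ 3 with hydef
    have heq : W.toAffine.Equation x y := by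
      rw [WeierstrassCurve.Affine.equation_iff, ha₁, ha₂, ha₃, ha₄, ha₆, hA', hB', hxdef, hydef]
      ring
    have hy0 : y ≠ 0 := by
      intro hc
      apply hΔ
      have hb : (b : ℚ) = -9 * (a : ℚ) ^ 3 := by rw [hydef] at hc; linarith
      have hbz : b = -9 * a ^ 3 := by exact_mod_cast hb
      rw [hA, hB, hbz]
      ring
    have hns := (W.toAffine.equation_iff_nonsingular_of_Δ_ne_zero hΔ').mp heq
    have hy : y ≠ W.toAffine.negY x y := by
      rw [hnegY]
      intro hc
      exact hy0 (by linarith)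
    have hslope : W.toAffine.slope x x y y = 3 * a := by
      rw [slope_of_Y_ne rfl hy, hnegY, ha₁, ha₂, ha₄]
      rw [div_eq_iff (by intro hc; exact hy0 (by linarith))]
      rw [hA', hxdef, hydef]
      ring
    have hxadd : W.toAffine.addX x x (W.toAffine.slope x x y y) = x := by
      rw [hslope, WeierstrassCurve.Affine.addX, ha₁, ha₂, hxdef]
      ring
    have hyadd : W.toAffine.addY x x y (W.toAffine.slope x x y y) = W.toAffine.negY x y := by
      rw [WeierstrassCurve.Affine.addY, WeierstrassCurve.Affine.negAddY, hxadd, sub_self,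
        mul_zero, zero_add]
    refine ⟨Point.some _ _ hns, ?_⟩
    have hPP : Point.some _ _ hns + Point.some _ _ hns = -Point.some _ _ hns := by
      rw [Point.add_self_of_Y_ne hy, Point.neg_some]
      exact some_eq_some _ _ hxadd hyadd
    have h3 : (3 : ℕ) • Point.some _ _ hns = 0 := by
      rw [show (3 : ℕ) = 2 + 1 from rfl, add_nsmul, two_nsmul, one_nsmul, hPP, neg_add_cancel]
    exact addOrderOf_eq_prime h3 (Point.some_ne_zero hns)
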